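/- With the colinear-means Gaussian mixture model (y = μ + w, μ taking value μ_i with probability p_i ≥ p_min > 0, all μ_i on the line spanned by unit vector u, w ∼ N(0,Σ) independent), for every integer t ≥ 1 and every v ∈ ℝ^d: E⟨y, v⟩^(2t) ≥ (⟨u, v⟩² · (E⟨μ, u⟩^(2t))^(1/t) + p_min^(1/t) · (t/2) · (vᵀΣv))^t. -/

import Mathlib

open MeasureTheory ProbabilityTheory Matrix Finset Filter Set Real
open scoped NNReal ENNReal


lemma auxA (s n : ℕ) : (2*s).factorial * (s+n).factorial ≤ s.factorial * (2*s+n).factorial := by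
  induction n with
  | zero => simp [two_mul, mul_comm]
  | succ n ih =>
      have h1 : (2*s).factorial * (s+(n+1)).factorial
          = (2*s).factorial * (s+n).factorial * (s+n+1) := by
        rw [show s+(n+1) = (s+n)+1 by omega, Nat.factorial_succ]; ring
      have h2 : s.factorial * (2*s+(n+1)).factorial
          = s.factorial * (2*s+n).factorial * (2*s+n+1) := by
        rw [show 2*s+(n+1) = (2*s+n)+1 by omega, Nat.factorial_succ]; ring
      rw [h1, h2]
      exact Nat.mul_le_mul (by exact ih) (by omega)

lemma auxB (t n : ℕ) (h : t ≤ n + 1) : ∀ r, n.factorial * t ^ r ≤ (n + r).factorial := by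
  intro r
  induction r with
  | zero => simp
  | succ r ih =>
      have : n.factorial * t ^ (r+1) = n.factorial * t ^ r * t := by ring
      rw [this, show n + (r+1) = (n+r)+1 by omega, Nat.factorial_succ]
      calc n.factorial * t ^ r * t ≤ (n+r).factorial * t := Nat.mul_le_mul_right _ ih
        _ ≤ (n+r).factorial * (n + r + 1) := Nat.mul_le_mul_left _ (by omega)
        _ = (n + r + 1) * (n+r).factorial := mul_comm _ _

lemma natIneq (s t : ℕ) (h : s ≤ t) :
    t.choose s * t ^ (t-s) * (t-s).factorial
      ≤ (2*t).choose (2*s) * (2*(t-s)).factorial := by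
  have h2 : 2*s ≤ 2*t := by omega
  have e1 := Nat.choose_mul_factorial_mul_factorial h
  have e2 := Nat.choose_mul_factorial_mul_factorial h2
  have key : (2*s).factorial * (t.factorial * t ^ (t-s)) ≤ s.factorial * (2*t).factorial := by
    calc (2*s).factorial * (t.factorial * t ^ (t-s))
        = ((2*s).factorial * (s+(t-s)).factorial) * t ^ (t-s) := by
          rw [show s + (t-s) = t by omega]; ring
      _ ≤ (s.factorial * (2*s+(t-s)).factorial) * t ^ (t-s) :=
          Nat.mul_le_mul_right _ (auxA s (t-s))
      _ = s.factorial * ((t+s).factorial * t ^ (t-s)) := by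
          rw [show 2*s+(t-s) = t+s by omega]; ring
      _ ≤ s.factorial * (2*t).factorial := by
          refine Nat.mul_le_mul_left _ ?_
          have := auxB t (t+s) (by omega) (t-s)
          rwa [show t+s+(t-s) = 2*t by omega] at this
  have hpos : 0 < s.factorial * (2*s).factorial :=
    Nat.mul_pos s.factorial_pos (2*s).factorial_pos
  refine Nat.le_of_mul_le_mul_left ?_ hpos
  calc s.factorial * (2*s).factorial * (t.choose s * t ^ (t-s) * (t-s).factorial)
      = (t.choose s * s.factorial * (t-s).factorial) * ((2*s).factorial * t ^ (t-s)) := by ring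
    _ = t.factorial * ((2*s).factorial * t ^ (t-s)) := by rw [e1]
    _ = (2*s).factorial * (t.factorial * t ^ (t-s)) := by ring
    _ ≤ s.factorial * (2*t).factorial := key
    _ = (2*t).factorial * s.factorial := mul_comm _ _
    _ = ((2*t).choose (2*s) * (2*s).factorial * (2*t - 2*s).factorial) * s.factorial := by rw [e2]
    _ = s.factorial * (2*s).factorial * ((2*t).choose (2*s) * (2*(t-s)).factorial) := by
        rw [show 2*t - 2*s = 2*(t-s) by omega]; ring

lemma coefIneq (s t : ℕ) (h : s ≤ t) :
    (t.choose s : ℝ) * ((t:ℝ)/2) ^ (t-s)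
      ≤ ((2*t).choose (2*s) : ℝ) * ((2*(t-s)).factorial / (2^(t-s) * (t-s).factorial)) := by
  set r := t - s with hr
  have h2 : (0:ℝ) < 2 ^ r := by positivity
  have hrf : (0:ℝ) < (r.factorial : ℝ) := by exact_mod_cast r.factorial_pos
  rw [div_pow, ← mul_div_assoc, ← mul_div_assoc, div_le_div_iff₀ h2 (by positivity)]
  have := natIneq s t h
  have hcast : (t.choose s : ℝ) * (t:ℝ)^r * (r.factorial : ℝ)
      ≤ ((2*t).choose (2*s) : ℝ) * ((2*r).factorial : ℝ) := by exact_mod_cast this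
  calc (t.choose s : ℝ) * (t:ℝ)^r * (2 ^ r * (r.factorial:ℝ))
      = ((t.choose s : ℝ) * (t:ℝ)^r * (r.factorial:ℝ)) * 2 ^ r := by ring
    _ ≤ (((2*t).choose (2*s) : ℝ) * ((2*r).factorial : ℝ)) * 2 ^ r := by
        exact mul_le_mul_of_nonneg_right hcast (by positivity)
    _ = ((2*t).choose (2*s) : ℝ) * ((2*r).factorial : ℝ) * 2 ^ r := by ring

lemma add_rpow_le (x y : ℝ) (hx : 0 ≤ x) (hy : 0 ≤ y) {e : ℝ} (he0 : 0 ≤ e) (he1 : e ≤ 1) :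
    (x + y) ^ e ≤ x ^ e + y ^ e := by
  have := NNReal.rpow_add_le_add_rpow x.toNNReal y.toNNReal he0 he1
  have hc := NNReal.coe_le_coe.2 this
  push_cast [NNReal.coe_rpow] at hc
  rwa [Real.coe_toNNReal _ hx, Real.coe_toNNReal _ hy] at hc

lemma sum_rpow_le {ι : Type*} (s : Finset ι) (f : ι → ℝ) (hf : ∀ i ∈ s, 0 ≤ f i)
    {e : ℝ} (he0 : 0 < e) (he1 : e ≤ 1) :
    (∑ i ∈ s, f i) ^ e ≤ ∑ i ∈ s, f i ^ e := by
  classical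
  induction s using Finset.cons_induction with
  | empty => simp [Real.zero_rpow he0.ne']
  | cons a s ha ih =>
      rw [Finset.sum_cons, Finset.sum_cons]
      have h1 : (f a + ∑ i ∈ s, f i) ^ e ≤ f a ^ e + (∑ i ∈ s, f i) ^ e :=
        add_rpow_le _ _ (hf a (Finset.mem_cons_self a s))
          (Finset.sum_nonneg fun i hi => hf i (Finset.mem_cons_of_mem hi)) he0.le he1
      exact h1.trans (by
        gcongr
        exact ih fun i hi => hf i (Finset.mem_cons_of_mem hi))

lemma powerMean {ι : Type*} [Fintype ι] [Nonempty ι] (q a : ι → ℝ) (pmin : ℝ)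
    (hpmin : 0 < pmin) (hq : ∀ j, pmin ≤ q j) {s t : ℕ} (hst : s ≤ t) (ht : 1 ≤ t) :
    pmin ^ (((t - s : ℕ) : ℝ)/t) * (∑ j, q j * a j ^ (2*t)) ^ ((s:ℝ)/t)
      ≤ ∑ j, q j * a j ^ (2*s) := by
  have htR : (0:ℝ) < t := by exact_mod_cast ht
  rcases Nat.eq_zero_or_pos s with rfl | hs
  · simp only [Nat.sub_zero, Nat.cast_zero, zero_div, Real.rpow_zero, mul_one, pow_zero]
    rw [div_self htR.ne']
    rw [Real.rpow_one]
    obtain ⟨j0⟩ := ‹Nonempty ι›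
    calc pmin ≤ q j0 := hq j0
      _ ≤ ∑ j, q j * 1 := by
          simp only [mul_one]
          exact Finset.single_le_sum (fun j _ => (hpmin.trans_le (hq j)).le) (Finset.mem_univ j0)
  · set e : ℝ := (s:ℝ)/t with he
    have he0 : 0 < e := by positivity
    have he1 : e ≤ 1 := by
      rw [he, div_le_one htR]; exact_mod_cast hst
    have hq0 : ∀ j, 0 < q j := fun j => hpmin.trans_le (hq j)
    -- step 1 : subadditivity
    have h1 : (∑ j, q j * a j ^ (2*t)) ^ e ≤ ∑ j, (q j * a j ^ (2*t)) ^ e :=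
      sum_rpow_le _ _ (fun j _ => mul_nonneg (hq0 j).le (by rw [pow_mul]; positivity)) he0 he1
    -- step 2 : pointwise
    have h2 : ∀ j, (q j * a j ^ (2*t)) ^ e ≤ pmin ^ (e - 1) * (q j * a j ^ (2*s)) := by
      intro j
      have ha2 : (0:ℝ) ≤ a j ^ 2 := sq_nonneg _
      have hpow : (a j ^ (2*t) : ℝ) ^ e = a j ^ (2*s) := by
        rw [pow_mul, ← Real.rpow_natCast ((a j ^2)) t,
          ← Real.rpow_mul ha2, show (t:ℝ) * e = (s:ℝ) by rw [he]; field_simp,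
          Real.rpow_natCast, ← pow_mul]
      rw [Real.mul_rpow (hq0 j).le (by rw [pow_mul]; positivity), hpow]
      have hqe : q j ^ e ≤ pmin ^ (e-1) * q j := by
        have : q j ^ e = q j ^ (e-1) * q j := by
          rw [← Real.rpow_add_one (hq0 j).ne']; ring_nf
        rw [this]
        exact mul_le_mul_of_nonneg_right
          (Real.rpow_le_rpow_of_nonpos hpmin (hq j) (by linarith)) (hq0 j).le
      calc q j ^ e * a j ^ (2*s) ≤ (pmin ^ (e-1) * q j) * a j ^ (2*s) :=
            mul_le_mul_of_nonneg_right hqe (by rw [pow_mul]; positivity)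
        _ = pmin ^ (e-1) * (q j * a j ^ (2*s)) := by ring
    have h3 : (∑ j, q j * a j ^ (2*t)) ^ e ≤ pmin ^ (e-1) * ∑ j, q j * a j ^ (2*s) := by
      calc (∑ j, q j * a j ^ (2*t)) ^ e ≤ ∑ j, (q j * a j ^ (2*t)) ^ e := h1
        _ ≤ ∑ j, pmin ^ (e-1) * (q j * a j ^ (2*s)) := Finset.sum_le_sum fun j _ => h2 j
        _ = pmin ^ (e-1) * ∑ j, q j * a j ^ (2*s) := by rw [← Finset.mul_sum]
    have hcast : (((t - s : ℕ)) : ℝ)/t = 1 - e := by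
      rw [he, Nat.cast_sub hst]; field_simp
    rw [hcast]
    calc pmin ^ (1 - e : ℝ) * (∑ j, q j * a j ^ (2*t)) ^ e
        ≤ pmin ^ (1 - e : ℝ) * (pmin ^ (e-1) * ∑ j, q j * a j ^ (2*s)) := by
          exact mul_le_mul_of_nonneg_left h3 (Real.rpow_nonneg hpmin.le _)
      _ = (pmin ^ (1 - e : ℝ) * pmin ^ (e-1)) * ∑ j, q j * a j ^ (2*s) := by ring
      _ = ∑ j, q j * a j ^ (2*s) := by
          rw [← Real.rpow_add hpmin, show (1-e) + (e-1) = 0 by ring, Real.rpow_zero, one_mul]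

lemma integrable_pow_mul_exp {b : ℝ} (hb : 0 < b) (n : ℕ) :
    Integrable (fun x : ℝ => x ^ n * Real.exp (-b * x^2)) := by
  have key : ∀ x : ℝ, ‖x ^ n * Real.exp (-b*x^2)‖
      ≤ (n.factorial * Real.exp (1/(2*b))) * Real.exp (-(b/2) * x^2) := by
    intro x
    rw [norm_mul, norm_pow, Real.norm_eq_abs, Real.norm_eq_abs,
      abs_of_pos (Real.exp_pos _)]
    have h1 : |x| ^ n ≤ n.factorial * Real.exp |x| := by
      have := Real.pow_div_factorial_le_exp (x := |x|) (abs_nonneg x) n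
      have hf : (0:ℝ) < n.factorial := by exact_mod_cast n.factorial_pos
      calc |x| ^ n = (|x| ^ n / n.factorial) * n.factorial := by field_simp
        _ ≤ Real.exp |x| * n.factorial := mul_le_mul_of_nonneg_right this hf.le
        _ = n.factorial * Real.exp |x| := mul_comm _ _
    have h2 : |x| ≤ (b/2) * x^2 + 1/(2*b) := by
      rw [← sub_nonneg, ← sq_abs x,
        show (b/2) * |x|^2 + 1/(2*b) - |x| = (b*|x|-1)^2/(2*b) by field_simp; ring_nf]
      positivity
    calc |x| ^ n * Real.exp (-b*x^2)
        ≤ (n.factorial * Real.exp |x|) * Real.exp (-b*x^2) :=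
          mul_le_mul_of_nonneg_right h1 (Real.exp_pos _).le
      _ = n.factorial * Real.exp (|x| + -b*x^2) := by rw [mul_assoc, ← Real.exp_add]
      _ ≤ n.factorial * Real.exp (1/(2*b) + -(b/2)*x^2) := by
          have hf : (0:ℝ) ≤ n.factorial := by positivity
          refine mul_le_mul_of_nonneg_left (Real.exp_le_exp.2 ?_) hf
          nlinarith
      _ = (n.factorial * Real.exp (1/(2*b))) * Real.exp (-(b/2) * x^2) := by
          rw [Real.exp_add]; ring
  refine Integrable.mono' ((integrable_exp_neg_mul_sq (show 0 < b/2 by linarith)).const_mul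
    (n.factorial * Real.exp (1/(2*b)))) ?_ (ae_of_all _ key)
  exact ((continuous_pow n).mul (by fun_prop)).aestronglyMeasurable

lemma tendstoF {b : ℝ} (hb : 0 < b) (n : ℕ) :
    Tendsto (fun x : ℝ => x ^ n * Real.exp (-b * x^2)) atTop (nhds 0) := by
  have h := rpow_mul_exp_neg_mul_sq_isLittleO_exp_neg hb (n : ℝ)
  have hhalf : Tendsto (fun x : ℝ => Real.exp (-(1/2) * x)) atTop (nhds 0) := by
    have h1 : Tendsto (fun x : ℝ => -(1/2) * x) atTop atBot :=
      Filter.tendsto_id.const_mul_atTop_of_neg (by norm_num)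
    exact Real.tendsto_exp_atBot.comp h1
  have h2 : Tendsto (fun x : ℝ => x ^ (n:ℝ) * Real.exp (-b * x^2)) atTop (nhds 0) :=
    h.isBigO.trans_tendsto hhalf
  refine h2.congr fun x => ?_
  rw [Real.rpow_natCast]

lemma gaussRec {b : ℝ} (hb : 0 < b) (k : ℕ) :
    2 * b * ∫ x in Ioi (0:ℝ), x ^ (2*k+2) * Real.exp (-b*x^2)
      = (2*k+1) * ∫ x in Ioi (0:ℝ), x ^ (2*k) * Real.exp (-b*x^2) := by
  set F := fun x : ℝ => x^(2*k+1) * Real.exp (-b*x^2) with hF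
  set F' := fun x : ℝ => (2*k+1) * (x^(2*k) * Real.exp (-b*x^2))
      - 2*b*(x^(2*k+2) * Real.exp (-b*x^2)) with hF'
  have hderiv : ∀ x : ℝ, HasDerivAt F (F' x) x := by
    intro x
    have h1 : HasDerivAt (fun y : ℝ => y^(2*k+1)) ((2*k+1) * x^(2*k)) x := by
      simpa using hasDerivAt_pow (2*k+1) x
    have h0 : HasDerivAt (fun y : ℝ => -b*y^2) (-b*(2*x)) x := by
      simpa using (hasDerivAt_pow 2 x).const_mul (-b)
    have h2 : HasDerivAt (fun y : ℝ => Real.exp (-b*y^2))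
        (Real.exp (-b*x^2) * (-b*(2*x))) x := (Real.hasDerivAt_exp _).comp x h0
    have := h1.mul h2
    refine this.congr_deriv ?_
    simp only [hF']
    ring
  have hint1 := (integrable_pow_mul_exp hb (2*k)).restrict (s := Ioi 0)
  have hint2 := (integrable_pow_mul_exp hb (2*k+2)).restrict (s := Ioi 0)
  have hint : IntegrableOn F' (Ioi 0) := by
    exact ((hint1.const_mul _).sub (hint2.const_mul _))
  have htend : Tendsto F atTop (nhds 0) := tendstoF hb (2*k+1)
  have key := integral_Ioi_of_hasDerivAt_of_tendsto
    (hderiv 0).continuousAt.continuousWithinAt (fun x _ => hderiv x) hint htend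
  have hF0 : F 0 = 0 := by simp [hF]
  rw [hF0, sub_zero] at key
  have hsplit : ∫ x in Ioi (0:ℝ), F' x
      = (2*k+1) * (∫ x in Ioi (0:ℝ), x^(2*k) * Real.exp (-b*x^2))
        - 2*b * ∫ x in Ioi (0:ℝ), x^(2*k+2) * Real.exp (-b*x^2) := by
    rw [hF']
    rw [integral_sub (hint1.const_mul _) (hint2.const_mul _),
      integral_const_mul, integral_const_mul]
  rw [hsplit] at key
  linarith

lemma fullEven {b : ℝ} (k : ℕ) :
    ∫ x : ℝ, x ^ (2*k) * Real.exp (-b*x^2)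
      = 2 * ∫ x in Ioi (0:ℝ), x ^ (2*k) * Real.exp (-b*x^2) := by
  rw [← integral_comp_abs (f := fun x => x^(2*k) * Real.exp (-b*x^2))]
  refine integral_congr_ae (ae_of_all _ fun x => ?_)
  simp only [pow_mul, sq_abs]

lemma pdf_repr {V : ℝ≥0} (hV : V ≠ 0) (n : ℕ) :
    ∫ x, x ^ n ∂(gaussianReal 0 V)
      = (Real.sqrt (2 * π * V))⁻¹ * ∫ x : ℝ, x ^ n * Real.exp (-(2*(V:ℝ))⁻¹ * x^2) := by
  rw [gaussianReal_of_var_ne_zero 0 hV, gaussianPDF_def]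
  have : (fun x => ENNReal.ofReal (gaussianPDFReal 0 V x))
      = (fun x => ((Real.toNNReal (gaussianPDFReal 0 V x) : ℝ≥0) : ENNReal)) := rfl
  rw [this, integral_withDensity_eq_integral_smul
    (measurable_gaussianPDFReal 0 V).real_toNNReal _]
  rw [← integral_const_mul]
  refine integral_congr_ae (ae_of_all _ fun x => ?_)
  simp only [NNReal.smul_def, smul_eq_mul]
  rw [Real.coe_toNNReal _ (gaussianPDFReal_nonneg 0 V x)]
  rw [gaussianPDFReal]
  have : -(x - 0)^2 / (2*(V:ℝ)) = -(2*(V:ℝ))⁻¹ * x^2 := by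
    rw [sub_zero]; field_simp
  rw [this]; ring

lemma gaussMomentRec {V : ℝ≥0} (hV : V ≠ 0) (k : ℕ) :
    ∫ x, x ^ (2*(k+1)) ∂(gaussianReal 0 V)
      = (V:ℝ) * (2*k+1) * ∫ x, x ^ (2*k) ∂(gaussianReal 0 V) := by
  have hVpos : (0:ℝ) < (V:ℝ) := by
    exact_mod_cast pos_iff_ne_zero.2 hV
  set b : ℝ := (2*(V:ℝ))⁻¹ with hb
  have hbpos : 0 < b := by positivity
  rw [pdf_repr hV, pdf_repr hV, fullEven (k := k+1), fullEven (k := k)]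
  have := gaussRec hbpos k
  have h2b : (2*b)⁻¹ = (V:ℝ) := by rw [hb]; field_simp
  have hIoi : ∫ x in Ioi (0:ℝ), x ^ (2*(k+1)) * Real.exp (-b*x^2)
      = (V:ℝ) * (2*k+1) * ∫ x in Ioi (0:ℝ), x ^ (2*k) * Real.exp (-b*x^2) := by
    have h2bpos : (0:ℝ) < 2*b := by linarith
    rw [show 2*(k+1) = 2*k+2 by ring]
    field_simp at this ⊢
    rw [← h2b]
    field_simp
    linarith [this]
  rw [hIoi]; ring

lemma gaussEvenMoment (V : ℝ≥0) (k : ℕ) :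
    ∫ x, x ^ (2*k) ∂(gaussianReal 0 V)
      = (V:ℝ)^k * ((2*k).factorial / (2^k * k.factorial)) := by
  by_cases hV : V = 0
  · subst hV
    rw [gaussianReal_zero_var, integral_dirac]
    rcases Nat.eq_zero_or_pos k with rfl | hk
    · simp
    · rw [zero_pow (by omega), NNReal.coe_zero, zero_pow (by omega), zero_mul]
  · induction k with
    | zero => simp [show (2*0 : ℕ) = 0 from rfl]
    | succ k ih =>
        rw [gaussMomentRec hV k, ih]
        have hfac : ((2*(k+1)).factorial : ℝ)
            = (2*k+2) * (2*k+1) * (2*k).factorial := by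
          rw [show 2*(k+1) = (2*k+1)+1 by ring, Nat.factorial_succ, Nat.factorial_succ]
          push_cast; ring
        have hfacp : ((k+1).factorial : ℝ) = (k+1) * k.factorial := by
          rw [Nat.factorial_succ]; push_cast; ring
        have hk0 : ((k.factorial : ℝ)) ≠ 0 := by
          exact_mod_cast k.factorial_ne_zero
        rw [hfac, hfacp]
        field_simp
        ring

lemma gaussSymm (V : ℝ≥0) :
    Measure.map (fun x : ℝ => -1 * x) (gaussianReal 0 V) = gaussianReal 0 V := by
  rw [gaussianReal_map_const_mul]
  norm_num

lemma gaussOddMoment (V : ℝ≥0) (n : ℕ) (hn : Odd n) :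
    ∫ x, x ^ n ∂(gaussianReal 0 V) = 0 := by
  have h := integral_map (μ := gaussianReal 0 V)
    (φ := fun x : ℝ => -1 * x) (f := fun x : ℝ => x ^ n)
    (measurable_const_mul _).aemeasurable
    (by exact (measurable_id.pow_const n).aestronglyMeasurable)
  rw [gaussSymm V] at h
  have heq : ∀ x : ℝ, (-1 * x) ^ n = -(x ^ n) := by
    intro x
    rw [mul_pow, hn.neg_one_pow]; ring
  simp only [heq, integral_neg] at h
  linarith

lemma gaussIntegrablePow (V : ℝ≥0) (n : ℕ) :
    Integrable (fun x : ℝ => x ^ n) (gaussianReal 0 V) := by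
  by_cases hV : V = 0
  · subst hV
    rw [gaussianReal_zero_var]
    refine ⟨(measurable_id.pow_const n).aestronglyMeasurable, ?_⟩
    simp only [HasFiniteIntegral]
    rw [lintegral_dirac' _ (by fun_prop)]
    exact ENNReal.coe_lt_top
  · have hVpos : (0:ℝ) < (V:ℝ) := by exact_mod_cast pos_iff_ne_zero.2 hV
    set b : ℝ := (2*(V:ℝ))⁻¹ with hb
    have hbpos : 0 < b := by positivity
    rw [gaussianReal_of_var_ne_zero 0 hV, gaussianPDF_def]
    have hrw : (fun x => ENNReal.ofReal (gaussianPDFReal 0 V x))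
        = (fun x => ((Real.toNNReal (gaussianPDFReal 0 V x) : ℝ≥0) : ENNReal)) := rfl
    rw [hrw, integrable_withDensity_iff_integrable_smul
      (measurable_gaussianPDFReal 0 V).real_toNNReal]
    have : ∀ x : ℝ, (Real.toNNReal (gaussianPDFReal 0 V x)) • (x ^ n)
        = (Real.sqrt (2 * π * V))⁻¹ * (x ^ n * Real.exp (-b * x^2)) := by
      intro x
      simp only [NNReal.smul_def, smul_eq_mul]
      rw [Real.coe_toNNReal _ (gaussianPDFReal_nonneg 0 V x), gaussianPDFReal]
      have : -(x - 0)^2 / (2*(V:ℝ)) = -b * x^2 := by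
        rw [hb, sub_zero]; field_simp
      rw [this]; ring
    simp only [this]
    exact (integrable_pow_mul_exp hbpos n).const_mul _

theorem stmt11 {Ω : Type*} [MeasurableSpace Ω] (P : Measure Ω) [IsProbabilityMeasure P]
    {d k : ℕ} (S : Matrix (Fin d) (Fin d) ℝ) (hS : S.PosSemidef)
    (u : Fin d → ℝ) (hu : u ⬝ᵥ u = 1)
    (m : Fin k → (Fin d → ℝ)) (hcol : ∀ j, m j = (m j ⬝ᵥ u) • u)
    (p : Fin k → ℝ) (pmin : ℝ) (hpmin : 0 < pmin) (hp : ∀ j, pmin ≤ p j)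
    (idx : Ω → Fin k) (hidx : Measurable idx)
    (hlaw : ∀ j, P (idx ⁻¹' {j}) = ENNReal.ofReal (p j))
    (wRV : Ω → (Fin d → ℝ)) (hwmeas : Measurable wRV)
    (hindep : IndepFun (fun ω => m (idx ω)) wRV P)
    (hgauss : ∀ v : Fin d → ℝ,
      Measure.map (fun ω => wRV ω ⬝ᵥ v) P
        = gaussianReal 0 (Real.toNNReal (v ⬝ᵥ S.mulVec v)))
    (t : ℕ) (ht : 1 ≤ t) (v : Fin d → ℝ) :
    ((u ⬝ᵥ v) ^ 2 * (∫ ω, (m (idx ω) ⬝ᵥ u) ^ (2 * t) ∂P) ^ ((1 : ℝ) / t)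
        + pmin ^ ((1 : ℝ) / t) * ((t : ℝ) / 2) * (v ⬝ᵥ S.mulVec v)) ^ t
      ≤ ∫ ω, ((m (idx ω) + wRV ω) ⬝ᵥ v) ^ (2 * t) ∂P := by
  classical
  have hΩ : Nonempty Ω := by
    by_contra h
    rw [not_nonempty_iff] at h
    have h1 : P Set.univ = 1 := measure_univ
    rw [Set.univ_eq_empty_iff.mpr h, measure_empty] at h1
    exact zero_ne_one h1
  have hk : Nonempty (Fin k) := ⟨idx (Classical.arbitrary Ω)⟩
  set c : ℝ := u ⬝ᵥ v with hc
  set a : Fin k → ℝ := fun j => m j ⬝ᵥ u with ha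
  set X : Ω → ℝ := fun ω => m (idx ω) ⬝ᵥ u with hX
  set W : Ω → ℝ := fun ω => wRV ω ⬝ᵥ v with hW
  set Vr : ℝ := v ⬝ᵥ S.mulVec v with hVr
  have hVr0 : 0 ≤ Vr := by simpa using hS.dotProduct_mulVec_nonneg v
  have hpj : ∀ j, 0 < p j := fun j => hpmin.trans_le (hp j)
  -- measurability
  have hdu : Measurable (fun y : Fin d → ℝ => y ⬝ᵥ u) := by
    simp only [dotProduct]
    exact Finset.measurable_sum _ fun i _ => (measurable_pi_apply i).mul_const _
  have hdv : Measurable (fun y : Fin d → ℝ => y ⬝ᵥ v) := by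
    simp only [dotProduct]
    exact Finset.measurable_sum _ fun i _ => (measurable_pi_apply i).mul_const _
  have hXmeas : Measurable X := hdu.comp (measurable_from_top.comp hidx)
  have hWmeas : Measurable W := hdv.comp hwmeas
  -- pointwise rewrite
  have hpt : ∀ ω, ((m (idx ω) + wRV ω) ⬝ᵥ v) = c * X ω + W ω := by
    intro ω
    rw [add_dotProduct]
    congr 1
    conv_lhs => rw [hcol (idx ω)]
    rw [smul_dotProduct, smul_eq_mul, mul_comm]
  -- law of W
  have hmapW : Measure.map W P = gaussianReal 0 (Real.toNNReal Vr) := hgauss v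
  set μW := gaussianReal 0 (Real.toNNReal Vr) with hμW
  set GW : ℕ → ℝ := fun n => ∫ x, x ^ n ∂μW with hGW
  have hWint : ∀ n, Integrable (fun ω => W ω ^ n) P := by
    intro n
    have h1 : Integrable (fun x : ℝ => x ^ n) (Measure.map W P) := by
      rw [hmapW]; exact gaussIntegrablePow _ n
    have hasm : AEStronglyMeasurable (fun x : ℝ => x ^ n) (Measure.map W P) :=
      (measurable_id.pow_const n).aestronglyMeasurable
    exact (integrable_map_measure hasm hWmeas.aemeasurable).mp h1
  have hWmom : ∀ n, ∫ ω, W ω ^ n ∂P = GW n := by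
    intro n
    have hf : Measurable (fun x : ℝ => x ^ n) := by fun_prop
    simp only [hGW]
    rw [← hmapW, integral_map hWmeas.aemeasurable hf.aestronglyMeasurable]
  have hGWeven : ∀ r : ℕ, GW (2*r) = Vr ^ r * ((2*r).factorial / (2^r * r.factorial)) := by
    intro r
    simp only [hGW, hμW]
    rw [gaussEvenMoment, Real.coe_toNNReal _ hVr0]
  have hGWodd : ∀ n, Odd n → GW n = 0 := fun n hn => gaussOddMoment _ n hn
  -- moments of X
  have hprobmap : IsProbabilityMeasure (Measure.map idx P) :=
    Measure.isProbabilityMeasure_map hidx.aemeasurable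
  have hmapidx : ∀ (g : Fin k → ℝ), ∫ ω, g (idx ω) ∂P = ∑ j, p j * g j := by
    intro g
    rw [← integral_map hidx.aemeasurable measurable_from_top.aestronglyMeasurable]
    rw [integral_fintype (Integrable.of_finite)]
    refine Finset.sum_congr rfl fun j _ => ?_
    rw [measureReal_def, Measure.map_apply hidx (measurableSet_singleton j), hlaw j,
      ENNReal.toReal_ofReal (hpj j).le, smul_eq_mul]
  set MX : ℕ → ℝ := fun n => ∫ ω, X ω ^ n ∂P with hMXdef
  have hMX : ∀ n, MX n = ∑ j, p j * a j ^ n := by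
    intro n
    exact hmapidx (fun j => a j ^ n)
  have hXint : ∀ n, Integrable (fun ω => X ω ^ n) P := by
    intro n
    have h1 : Integrable (fun j : Fin k => a j ^ n) (Measure.map idx P) :=
      Integrable.of_finite
    exact (integrable_map_measure measurable_from_top.aestronglyMeasurable
      hidx.aemeasurable).mp h1
  have hMXnn : ∀ s : ℕ, 0 ≤ MX (2*s) := by
    intro s
    rw [hMX]
    exact Finset.sum_nonneg fun j _ => mul_nonneg (hpj j).le (by rw [pow_mul]; positivity)
  -- independence
  have hIndep : IndepFun X W P := hindep.comp hdu hdv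
  have hIndepPow : ∀ i j : ℕ, IndepFun (fun ω => X ω ^ i) (fun ω => W ω ^ j) P :=
    fun i j => hIndep.comp (measurable_id.pow_const i) (measurable_id.pow_const j)
  -- expansion
  set T : ℕ → ℝ := fun i => ((2*t).choose i : ℝ) * c^i * (MX i * GW (2*t - i)) with hT
  have hsum : ∫ ω, (c * X ω + W ω)^(2*t) ∂P = ∑ i ∈ range (2*t+1), T i := by
    have hterm : ∀ ω, (c * X ω + W ω)^(2*t)
        = ∑ i ∈ range (2*t+1), ((2*t).choose i : ℝ) * c^i * (X ω ^ i * W ω ^(2*t-i)) := by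
      intro ω
      rw [add_pow]
      refine Finset.sum_congr rfl fun i _ => ?_
      rw [mul_pow]; ring
    calc ∫ ω, (c * X ω + W ω)^(2*t) ∂P
        = ∫ ω, ∑ i ∈ range (2*t+1),
            ((2*t).choose i : ℝ) * c^i * (X ω ^ i * W ω ^(2*t-i)) ∂P :=
          integral_congr_ae (ae_of_all _ hterm)
      _ = ∑ i ∈ range (2*t+1), ∫ ω,
            ((2*t).choose i : ℝ) * c^i * (X ω ^ i * W ω ^(2*t-i)) ∂P := by
          refine integral_finset_sum _ fun i _ => ?_
          exact ((hIndepPow i (2*t-i)).integrable_mul (hXint i) (hWint _)).const_mul _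
      _ = ∑ i ∈ range (2*t+1), T i := by
          refine Finset.sum_congr rfl fun i _ => ?_
          rw [integral_const_mul]
          rw [(hIndepPow i (2*t-i)).integral_fun_mul_eq_mul_integral (hXmeas.pow_const i).aestronglyMeasurable
            (hWmeas.pow_const (2*t-i)).aestronglyMeasurable]
          rw [hWmom]
  have hTnn : ∀ i ∈ range (2*t+1), 0 ≤ T i := by
    intro i hi
    have hile : i ≤ 2*t := by
      have := Finset.mem_range.mp hi; omega
    rcases Nat.even_or_odd i with ⟨s, hs⟩ | hodd
    · have hieq : i = 2*s := by omega
      subst hieq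
      have h1 : (0:ℝ) ≤ c ^ (2*s) := by rw [pow_mul]; positivity
      have h2 : 0 ≤ GW (2*t - 2*s) := by
        have heq : 2*t - 2*s = 2*(t-s) := by omega
        rw [heq, hGWeven]
        positivity
      have h3 : (0:ℝ) ≤ ((2*t).choose (2*s) : ℝ) := by positivity
      simp only [hT]
      exact mul_nonneg (mul_nonneg h3 h1) (mul_nonneg (hMXnn s) h2)
    · obtain ⟨j, hj⟩ := hodd
      have hoddsub : Odd (2*t - i) := ⟨t - j - 1, by omega⟩
      simp only [hT]
      rw [hGWodd (2*t - i) hoddsub, mul_zero, mul_zero]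
  -- RHS reduction
  have hRHS1 : ∫ ω, ((m (idx ω) + wRV ω) ⬝ᵥ v) ^ (2*t) ∂P = ∑ i ∈ range (2*t+1), T i := by
    rw [← hsum]
    refine integral_congr_ae (ae_of_all _ fun ω => ?_)
    dsimp only
    rw [hpt ω]
  have hsub : ∑ s ∈ range (t+1), T (2*s) ≤ ∑ i ∈ range (2*t+1), T i := by
    have himg : ∑ s ∈ range (t+1), T (2*s)
        = ∑ i ∈ (range (t+1)).image (fun s => 2*s), T i :=
      (Finset.sum_image (fun x _ y _ h => by omega)).symm
    rw [himg]
    refine Finset.sum_le_sum_of_subset_of_nonneg ?_ (fun i hi _ => hTnn i hi)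
    intro i hi
    simp only [Finset.mem_image, Finset.mem_range] at hi ⊢
    obtain ⟨s, hs, rfl⟩ := hi
    omega
  -- rewrite the goal
  have hIeq : (∫ ω, (m (idx ω) ⬝ᵥ u) ^ (2 * t) ∂P) = MX (2*t) := by
    rw [hMXdef]
  rw [hIeq, hRHS1]
  set A : ℝ := c^2 * (MX (2*t)) ^ ((1:ℝ)/(t:ℝ)) with hA
  set B : ℝ := pmin ^ ((1:ℝ)/(t:ℝ)) * ((t:ℝ)/2) * Vr with hB
  have htR : (0:ℝ) < t := by exact_mod_cast ht
  have key : ∀ s ∈ range (t+1), A^s * B^(t-s) * (t.choose s : ℝ) ≤ T (2*s) := by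
    intro s hs
    have hst : s ≤ t := by
      have := Finset.mem_range.mp hs; omega
    set r := t - s with hr
    have hc2 : (0:ℝ) ≤ c^(2*s) := by rw [pow_mul]; positivity
    have hVrr : (0:ℝ) ≤ Vr^r := pow_nonneg hVr0 r
    have e1 : A^s = c^(2*s) * (MX (2*t)) ^ ((s:ℝ)/(t:ℝ)) := by
      rw [hA, mul_pow, ← pow_mul, ← Real.rpow_natCast (MX (2*t) ^ ((1:ℝ)/(t:ℝ))) s,
        ← Real.rpow_mul (hMXnn t), show ((1:ℝ)/(t:ℝ) * (s:ℕ)) = (s:ℝ)/(t:ℝ) by ring]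
    have e2 : B^r = pmin ^ (((r:ℕ):ℝ)/(t:ℝ)) * (((t:ℝ)/2)^r * Vr^r) := by
      rw [hB, mul_pow, mul_pow, ← Real.rpow_natCast (pmin ^ ((1:ℝ)/(t:ℝ))) r,
        ← Real.rpow_mul hpmin.le, show ((1:ℝ)/(t:ℝ) * (r:ℕ)) = ((r:ℕ):ℝ)/(t:ℝ) by ring,
        mul_assoc]
    have e3 : GW (2*t - 2*s) = Vr^r * (((2*r).factorial : ℝ)/(2^r * (r.factorial : ℝ))) := by
      rw [show 2*t - 2*s = 2*r by omega, hGWeven]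
    have hpm : pmin ^ (((r:ℕ):ℝ)/(t:ℝ)) * (MX (2*t)) ^ ((s:ℝ)/(t:ℝ)) ≤ MX (2*s) := by
      rw [hMX (2*t), hMX (2*s)]
      exact powerMean p a pmin hpmin hp hst ht
    have hco := coefIneq s t hst
    have hpmnn : (0:ℝ) ≤ pmin ^ (((r:ℕ):ℝ)/(t:ℝ)) * (MX (2*t)) ^ ((s:ℝ)/(t:ℝ)) :=
      mul_nonneg (Real.rpow_nonneg hpmin.le _) (Real.rpow_nonneg (hMXnn t) _)
    calc A^s * B^r * (t.choose s : ℝ)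
        = ((t.choose s : ℝ) * ((t:ℝ)/2)^r)
            * (pmin ^ (((r:ℕ):ℝ)/(t:ℝ)) * (MX (2*t)) ^ ((s:ℝ)/(t:ℝ)))
            * (c^(2*s) * Vr^r) := by rw [e1, e2]; ring
      _ ≤ (((2*t).choose (2*s) : ℝ) * (((2*r).factorial : ℝ)/(2^r * (r.factorial:ℝ))))
            * (MX (2*s)) * (c^(2*s) * Vr^r) := by
          refine mul_le_mul_of_nonneg_right (mul_le_mul hco hpm hpmnn ?_)
            (mul_nonneg hc2 hVrr)
          positivity
      _ = T (2*s) := by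
          simp only [hT]
          rw [e3]; ring
  calc (A + B)^t = ∑ s ∈ range (t+1), A^s * B^(t-s) * (t.choose s : ℝ) := add_pow A B t
    _ ≤ ∑ s ∈ range (t+1), T (2*s) := Finset.sum_le_sum key
    _ ≤ ∑ i ∈ range (2*t+1), T i := hsub
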